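/- (Instantaneous efficacy bound.) Let V be a positive definite d×d real matrix, r ≥ 0, and let θ̂, θ*, θ̃, x, x* ∈ ℝ^d satisfy ‖θ* − θ̂‖_V ≤ r, ‖θ̃ − θ̂‖_V ≤ r, and ⟨θ̃, x⟩ ≥ ⟨θ*, x*⟩. Then ⟨θ*, x*⟩ − ⟨θ*, x⟩ ≤ 2 r ‖x‖_{V^{-1}}. -/

import Mathlib

open Matrix

/-- `‖z‖_W := √(zᵀ W z)` for a `d × d` real matrix `W`. -/
noncomputable def matNorm {d : ℕ} (W : Matrix (Fin d) (Fin d) ℝ) (z : Fin d → ℝ) : ℝ :=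
  Real.sqrt (z ⬝ᵥ (W *ᵥ z))

lemma matNorm_nonneg {d : ℕ} (W : Matrix (Fin d) (Fin d) ℝ) (z : Fin d → ℝ) :
    0 ≤ matNorm W z := Real.sqrt_nonneg _

lemma dot_symm {d : ℕ} {V : Matrix (Fin d) (Fin d) ℝ} (hV : V.IsHermitian)
    (a b : Fin d → ℝ) : a ⬝ᵥ (V *ᵥ b) = b ⬝ᵥ (V *ᵥ a) := by
  rw [dotProduct_mulVec, ← mulVec_transpose]
  rw [show Vᵀ = V from by
    have h := hV.eq; rwa [Matrix.conjTranspose_eq_transpose_of_trivial] at h]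
  exact dotProduct_comm _ _
  
lemma dot_nonneg {d : ℕ} {V : Matrix (Fin d) (Fin d) ℝ} (hV : V.PosDef)
    (z : Fin d → ℝ) : 0 ≤ z ⬝ᵥ (V *ᵥ z) := by
  have := hV.posSemidef.dotProduct_mulVec_nonneg z
  rwa [star_trivial] at this

lemma sq_matNorm {d : ℕ} {V : Matrix (Fin d) (Fin d) ℝ} (hV : V.PosDef)
    (z : Fin d → ℝ) : matNorm V z ^ 2 = z ⬝ᵥ (V *ᵥ z) := by
  rw [matNorm, Real.sq_sqrt (dot_nonneg hV z)]

/-- Cauchy–Schwarz for the bilinear form of a positive definite matrix. -/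
lemma cs {d : ℕ} {V : Matrix (Fin d) (Fin d) ℝ} (hV : V.PosDef)
    (u w : Fin d → ℝ) : u ⬝ᵥ (V *ᵥ w) ≤ matNorm V u * matNorm V w := by
  set A := w ⬝ᵥ (V *ᵥ w) with hA
  set B := u ⬝ᵥ (V *ᵥ w) with hB
  set C := u ⬝ᵥ (V *ᵥ u) with hC
  have hdisc : discrim A (2 * B) C ≤ 0 := by
    apply discrim_le_zero
    intro t
    have h := dot_nonneg hV (u + t • w)
    have hexp : (u + t • w) ⬝ᵥ (V *ᵥ (u + t • w)) = A * (t * t) + 2 * B * t + C := by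
      simp only [mulVec_add, mulVec_smul, dotProduct_add, add_dotProduct,
        dotProduct_smul, smul_dotProduct, smul_eq_mul]
      rw [dot_symm hV.isHermitian w u, ← hB, ← hA, ← hC]
      ring
    rw [hexp] at h
    exact h
  rw [discrim] at hdisc
  have hBsq : B ^ 2 ≤ C * A := by nlinarith
  calc B ≤ |B| := le_abs_self _
    _ = Real.sqrt (B ^ 2) := (Real.sqrt_sq_eq_abs B).symm
    _ ≤ Real.sqrt (C * A) := Real.sqrt_le_sqrt hBsq
    _ = matNorm V u * matNorm V w := by
        rw [Real.sqrt_mul (dot_nonneg hV u), matNorm, matNorm]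

lemma matNorm_triangle {d : ℕ} {V : Matrix (Fin d) (Fin d) ℝ} (hV : V.PosDef)
    (p q : Fin d → ℝ) : matNorm V (p + q) ≤ matNorm V p + matNorm V q := by
  have h1 : (p + q) ⬝ᵥ (V *ᵥ (p + q)) ≤ (matNorm V p + matNorm V q) ^ 2 := by
    have hcross := cs hV p q
    have hp := sq_matNorm hV p
    have hq := sq_matNorm hV q
    have hexp : (p + q) ⬝ᵥ (V *ᵥ (p + q))
        = p ⬝ᵥ (V *ᵥ p) + 2 * (p ⬝ᵥ (V *ᵥ q)) + q ⬝ᵥ (V *ᵥ q) := by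
      simp only [mulVec_add, dotProduct_add, add_dotProduct]
      rw [dot_symm hV.isHermitian q p]
      ring
    nlinarith
  have := Real.sqrt_le_sqrt h1
  rwa [Real.sqrt_sq (add_nonneg (matNorm_nonneg _ _) (matNorm_nonneg _ _))] at this

/-- instantaneous efficacy bound: if `‖θ* − θ̂‖_V ≤ r`, `‖θ̃ − θ̂‖_V ≤ r`
and `⟨θ̃, x⟩ ≥ ⟨θ*, x*⟩`, then `⟨θ*, x*⟩ − ⟨θ*, x⟩ ≤ 2 r ‖x‖_{V⁻¹}`. -/
theorem instantaneous_efficacy_bound (d : ℕ)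
    (V : Matrix (Fin d) (Fin d) ℝ) (hV : V.PosDef) (r : ℝ) (hr : 0 ≤ r)
    (θhat θstar θtilde x xstar : Fin d → ℝ)
    (h1 : matNorm V (θstar - θhat) ≤ r)
    (h2 : matNorm V (θtilde - θhat) ≤ r)
    (h3 : θstar ⬝ᵥ xstar ≤ θtilde ⬝ᵥ x) :
    θstar ⬝ᵥ xstar - θstar ⬝ᵥ x ≤ 2 * r * matNorm V⁻¹ x := by
  have hdet : IsUnit V.det := isUnit_iff_ne_zero.mpr (ne_of_gt hV.det_pos)
  set y : Fin d → ℝ := V⁻¹ *ᵥ x with hy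
  have hVy : V *ᵥ y = x := by
    rw [hy, mulVec_mulVec, Matrix.mul_nonsing_inv _ hdet, one_mulVec]
  have hynorm : matNorm V y = matNorm V⁻¹ x := by
    unfold matNorm
    congr 1
    rw [hVy, hy, dotProduct_mulVec, ← mulVec_transpose]
    rw [show (V⁻¹)ᵀ = V⁻¹ from by
      have h := hV.isHermitian.inv.eq
      rwa [Matrix.conjTranspose_eq_transpose_of_trivial] at h]
  have hneg : matNorm V (θstar - θhat) = matNorm V (θhat - θstar) := by
    unfold matNorm
    congr 1
    have : θhat - θstar = -(θstar - θhat) := by abel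
    rw [this, mulVec_neg, neg_dotProduct, dotProduct_neg, neg_neg]
  have htri : matNorm V (θtilde - θstar) ≤ 2 * r := by
    have : θtilde - θstar = (θtilde - θhat) + (θhat - θstar) := by abel
    rw [this]
    calc matNorm V ((θtilde - θhat) + (θhat - θstar))
        ≤ matNorm V (θtilde - θhat) + matNorm V (θhat - θstar) := matNorm_triangle hV _ _
      _ ≤ 2 * r := by rw [← hneg]; linarith
  have key : (θtilde - θstar) ⬝ᵥ x ≤ 2 * r * matNorm V⁻¹ x := by
    calc (θtilde - θstar) ⬝ᵥ x = (θtilde - θstar) ⬝ᵥ (V *ᵥ y) := by rw [hVy]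
      _ ≤ matNorm V (θtilde - θstar) * matNorm V y := cs hV _ _
      _ ≤ 2 * r * matNorm V⁻¹ x := by
          rw [hynorm]
          exact mul_le_mul_of_nonneg_right htri (matNorm_nonneg _ _)
  have hsub : (θtilde - θstar) ⬝ᵥ x = θtilde ⬝ᵥ x - θstar ⬝ᵥ x := sub_dotProduct _ _ _
  linarith [key, hsub]
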